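/- arXiv:2604.02092 — 9 statements merged into one kernel-verified Lean document; each statement's English description precedes it below -/
import Mathlib

section
/- Let n, ℓ ≥ 1 and let g : [ℕ]^n → {0,1} be a coloring with no g-homogeneous set for color 1 of size ℓ. Then there exists a stable coloring f : [ℕ]^{n+1} → {0,1} whose limit coloring is g and which has no f-homogeneous set for color 1 of size ℓ+1. -/
/-- If `g : [ℕ]^n → 2` has no homogeneous set for color 1 of size `ℓ`,
then there exists a stable coloring `f : [ℕ]^{n+1} → 2` whose limit coloring is `g`
(encoded by: for every `n`-element set `s`, `f (insert y s) = g s` for all sufficiently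
large `y > max s`) and which has no homogeneous set for color 1 of size `ℓ+1`. -/
theorem stable_extension_of_bounded_coloring
    (n ℓ : ℕ) (hn : 1 ≤ n) (hℓ : 1 ≤ ℓ)
    (g : Finset ℕ → Fin 2)
    (hg : ¬ ∃ H : Finset ℕ, H.card = ℓ ∧ ∀ t ⊆ H, t.card = n → g t = 1) :
    ∃ f : Finset ℕ → Fin 2,
      (∀ s : Finset ℕ, s.card = n →
        ∃ N : ℕ, ∀ y : ℕ, N ≤ y → (∀ x ∈ s, x < y) → f (insert y s) = g s) ∧
      ¬ ∃ H : Finset ℕ, H.card = ℓ + 1 ∧ ∀ t ⊆ H, t.card = n + 1 → f t = 1 := by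
  refine ⟨fun t => g (t.erase (t.sup id)), ?_, ?_⟩
  · intro s hs
    refine ⟨0, fun y _ hy => ?_⟩
    have hys : y ∉ s := fun h => lt_irrefl y (hy y h)
    have hsup : (insert y s).sup id = y := by
      rw [Finset.sup_insert]
      simp only [id]
      exact sup_eq_left.mpr (Finset.sup_le fun x hx => (hy x hx).le)
    simp only [hsup, Finset.erase_insert hys]
  · rintro ⟨H, hcard, hhom⟩
    have hHne : H.Nonempty := by rw [← Finset.card_pos, hcard]; omega
    set m := H.max' hHne with hm
    apply hg
    refine ⟨H.erase m, ?_, ?_⟩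
    · rw [Finset.card_erase_of_mem (H.max'_mem hHne), hcard]; omega
    · intro t ht htc
      have hmt : m ∉ t := fun h => (Finset.mem_erase.mp (ht h)).1 rfl
      have htH : t ⊆ H := ht.trans (Finset.erase_subset _ _)
      have h1 : insert m t ⊆ H := Finset.insert_subset (H.max'_mem hHne) htH
      have h2 : (insert m t).card = n + 1 := by
        rw [Finset.card_insert_of_notMem hmt, htc]
      have hf := hhom _ h1 h2
      have hlt : ∀ x ∈ t, x < m := fun x hx =>
        lt_of_le_of_ne (H.le_max' x (htH hx)) (fun h => hmt (h ▸ hx))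
      have hsup : (insert m t).sup id = m := by
        rw [Finset.sup_insert]
        simp only [id]
        exact sup_eq_left.mpr (Finset.sup_le fun x hx => (hlt x hx).le)
      simpa only [hsup, Finset.erase_insert hmt] using hf
end

section
/- Let n ≥ 1, k ≥ 1, and let f : [ℕ]^{n+1} → {0,…,k−1} be a coloring. For each s ∈ [ℕ]^n and each i < k, let R_{s,i} = { y ∈ ℕ : y > max s and f(s ∪ {y}) = i }. If C ⊆ ℕ is an infinite set which is cohesive for the family (R_{s,i})_{s ∈ [ℕ]^n, i < k}, then f is stable on C: for every s ∈ [C]^n, the value f(s ∪ {y}) is eventually constant as y ranges over the elements of C greater than max s. -/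
/-- If `C` is an infinite set cohesive for the family
`R_{s,i} = { y : y > max s ∧ f (insert y s) = i }` (for `s ∈ [ℕ]^n`, `i < k`),
then `f : [ℕ]^{n+1} → k` is stable on `C`: for every `n`-element subset `s` of `C`,
`f (insert y s)` is eventually constant as `y` ranges over elements of `C`
greater than `max s`. -/
theorem cohesive_makes_stable
    (n k : ℕ) (hn : 1 ≤ n) (hk : 1 ≤ k)
    (f : Finset ℕ → Fin k)
    (C : Set ℕ) (hCinf : C.Infinite)
    (hcoh : ∀ s : Finset ℕ, s.card = n → ∀ i : Fin k,
      (C \ {y : ℕ | (∀ x ∈ s, x < y) ∧ f (insert y s) = i}).Finite ∨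
      (C ∩ {y : ℕ | (∀ x ∈ s, x < y) ∧ f (insert y s) = i}).Finite) :
    ∀ s : Finset ℕ, ↑s ⊆ C → s.card = n →
      ∃ c : Fin k, ∃ N : ℕ, ∀ y ∈ C, N ≤ y → (∀ x ∈ s, x < y) →
        f (insert y s) = c := by
  intro s hsC hcard
  by_cases h : ∃ i : Fin k,
      (C \ {y : ℕ | (∀ x ∈ s, x < y) ∧ f (insert y s) = i}).Finite
  · obtain ⟨i, hi⟩ := h
    obtain ⟨N, hN⟩ := hi.bddAbove
    refine ⟨i, N + 1, ?_⟩
    intro y hyC hNy hxy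
    by_contra hne
    have hmem : y ∈ C \ {y : ℕ | (∀ x ∈ s, x < y) ∧ f (insert y s) = i} :=
      ⟨hyC, fun hm => hne hm.2⟩
    have := hN hmem
    omega
  · push_neg at h
    exfalso
    have hfin : ∀ i : Fin k,
        (C ∩ {y : ℕ | (∀ x ∈ s, x < y) ∧ f (insert y s) = i}).Finite := by
      intro i
      rcases hcoh s hcard i with h1 | h1
      · exact absurd h1 (h i)
      · exact h1
    have hbig : (C ∩ {y : ℕ | ∀ x ∈ s, x < y}).Finite := by
      apply Set.Finite.subset (Set.finite_iUnion hfin)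
      rintro y ⟨hyC, hyall⟩
      exact Set.mem_iUnion.2 ⟨f (insert y s), hyC, hyall, rfl⟩
    have hsmall : (C \ {y : ℕ | ∀ x ∈ s, x < y}).Finite := by
      apply Set.Finite.subset (Set.finite_Iic (s.sup id))
      rintro y ⟨hyC, hy⟩
      simp only [Set.mem_setOf_eq, not_forall, not_lt] at hy
      obtain ⟨x, hxs, hxy⟩ := hy
      exact le_trans hxy (Finset.le_sup (f := id) hxs)
    have : C.Finite := by
      refine (hsmall.union hbig).subset (fun y hy => ?_)
      by_cases hc : ∀ x ∈ s, x < y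
      · exact Or.inr ⟨hy, hc⟩
      · exact Or.inl ⟨hy, hc⟩
    exact hCinf this
end

section
/- Let ℓ ≥ 1 and let f : [ℕ]² → {0,1} be a coloring with no f-homogeneous set for color 1 of size ℓ. Let S ⊆ ℕ be an infinite f-transitive set. For each a ∈ S, let g(a) be the maximal cardinality of a finite set F ⊆ S with max F = a that is f-homogeneous for color 1. Then: (i) 1 ≤ g(a) ≤ ℓ−1 for every a ∈ S; and (ii) every subset H ⊆ S on which g is constant is f-homogeneous for color 0. -/
/-- Let `f : [ℕ]² → 2` have no homogeneous set for color 1 of size `ℓ`,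
and let `S` be an infinite `f`-transitive set. For `a ∈ S`, let `g a` be the maximal
cardinality of a finite `F ⊆ S` with `max F = a` which is `f`-homogeneous for color 1
(encoded by `hg`). Then (i) `1 ≤ g a ≤ ℓ - 1` for every `a ∈ S`, and (ii) every
subset of `S` on which `g` is constant is `f`-homogeneous for color 0. -/
theorem rank_function_on_transitive_set
    (ℓ : ℕ) (hℓ : 1 ≤ ℓ) (f : ℕ → ℕ → Fin 2)
    (hbd : ¬ ∃ F : Finset ℕ, F.card = ℓ ∧ ∀ x ∈ F, ∀ y ∈ F, x < y → f x y = 1)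
    (S : Set ℕ) (hSinf : S.Infinite)
    (htrans : ∀ x ∈ S, ∀ y ∈ S, ∀ z ∈ S, x < y → y < z →
      f x y = f y z → f x y = f x z)
    (g : ℕ → ℕ)
    (hg : ∀ a ∈ S,
      (∃ F : Finset ℕ, ↑F ⊆ S ∧ a ∈ F ∧ (∀ x ∈ F, x ≤ a) ∧
        (∀ x ∈ F, ∀ y ∈ F, x < y → f x y = 1) ∧ F.card = g a) ∧
      (∀ F : Finset ℕ, ↑F ⊆ S → a ∈ F → (∀ x ∈ F, x ≤ a) →
        (∀ x ∈ F, ∀ y ∈ F, x < y → f x y = 1) → F.card ≤ g a)) :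
    (∀ a ∈ S, 1 ≤ g a ∧ g a ≤ ℓ - 1) ∧
    (∀ H : Set ℕ, H ⊆ S → (∀ a ∈ H, ∀ b ∈ H, g a = g b) →
      ∀ x ∈ H, ∀ y ∈ H, x < y → f x y = 0) := by
  constructor
  · intro a ha
    obtain ⟨⟨F, hFS, haF, hFle, hFhom, hFcard⟩, hmax⟩ := hg a ha
    constructor
    · have := hmax {a} (by simpa using ha) (by simp) (by simp)
        (by intro x hx y hy hxy; simp at hx hy; omega)
      simpa using this
    · by_contra h
      have hge : ℓ ≤ F.card := by omega
      obtain ⟨F', hF'sub, hF'card⟩ := Finset.exists_subset_card_eq hge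
      exact hbd ⟨F', hF'card, fun x hx y hy hxy =>
        hFhom x (hF'sub hx) y (hF'sub hy) hxy⟩
  · intro H hHS hconst x hx y hy hxy
    by_contra hne
    have hxy1 : f x y = 1 := by omega
    obtain ⟨⟨F, hFS, hxF, hFle, hFhom, hFcard⟩, -⟩ := hg x (hHS hx)
    have hyS : y ∈ S := hHS hy
    have hynF : y ∉ F := fun h => absurd (hFle y h) (by omega)
    have hhom : ∀ u ∈ insert y F, ∀ v ∈ insert y F, u < v → f u v = 1 := by
      intro u hu v hv huv
      simp only [Finset.mem_insert] at hu hv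
      rcases hu with rfl | hu
      · rcases hv with rfl | hv
        · omega
        · exact absurd (hFle v hv) (by omega)
      · rcases hv with rfl | hv
        · rcases lt_or_eq_of_le (hFle u hu) with hux | rfl
          · have hfu : f u x = 1 := hFhom u hu x hxF hux
            have := htrans u (hFS hu) x (hHS hx) v hyS hux hxy (by rw [hfu, hxy1])
            rw [hfu] at this; exact this.symm
          · exact hxy1
        · exact hFhom u hu v hv huv
    obtain ⟨-, hmaxy⟩ := hg y hyS
    have hle : ∀ z ∈ insert y F, z ≤ y := by
      intro z hz
      simp only [Finset.mem_insert] at hz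
      rcases hz with rfl | hz
      · exact le_refl z
      · exact le_trans (hFle z hz) (le_of_lt hxy)
    have := hmaxy (insert y F) (by
        intro z hz
        simp only [Finset.coe_insert, Set.mem_insert_iff] at hz
        rcases hz with rfl | hz
        · exact hyS
        · exact hFS hz)
      (Finset.mem_insert_self y F) hle hhom
    rw [Finset.card_insert_of_notMem hynF, hFcard, hconst x hx y hy] at this
    omega
end

section
/- Let ℓ ≥ 1 and let f : [ℕ]² → {0,1} be a coloring with no f-homogeneous set for color 1 of size ℓ. Then every infinite f-transitive set S ⊆ ℕ contains an infinite subset which is f-homogeneous for color 0. -/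
/-- If `f : [ℕ]² → 2` has no homogeneous set for color 1 of size `ℓ`,
then every infinite `f`-transitive set `S` contains an infinite subset which is
`f`-homogeneous for color 0. -/
theorem transitive_set_has_homogeneous_subset
    (ℓ : ℕ) (hℓ : 1 ≤ ℓ) (f : ℕ → ℕ → Fin 2)
    (hbd : ¬ ∃ F : Finset ℕ, F.card = ℓ ∧ ∀ x ∈ F, ∀ y ∈ F, x < y → f x y = 1)
    (S : Set ℕ) (hSinf : S.Infinite)
    (htrans : ∀ x ∈ S, ∀ y ∈ S, ∀ z ∈ S, x < y → y < z →
      f x y = f y z → f x y = f x z) :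
    ∃ H : Set ℕ, H ⊆ S ∧ H.Infinite ∧ ∀ x ∈ H, ∀ y ∈ H, x < y → f x y = 0 := by
  classical
  -- P x n : there is a 1-homogeneous chain of size n inside S with max element x
  set P : ℕ → ℕ → Prop := fun x n => ∃ F : Finset ℕ,
    ↑F ⊆ S ∧ F.card = n ∧ (∀ y ∈ F, y ≤ x) ∧ x ∈ F ∧
    ∀ a ∈ F, ∀ b ∈ F, a < b → f a b = 1 with hPdef
  set r : ℕ → ℕ := fun x => Nat.findGreatest (P x) ℓ with hrdef
  have hP1 : ∀ x ∈ S, P x 1 := by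
    intro x hx
    refine ⟨{x}, by simpa using hx, by simp, by simp, by simp, ?_⟩
    intro a ha b hb hab
    simp only [Finset.mem_singleton] at ha hb
    omega
  have hPlt : ∀ x n, P x n → n < ℓ := by
    rintro x n ⟨F, hFS, hFc, -, -, hFh⟩
    by_contra h
    push_neg at h
    obtain ⟨G, hGF, hGc⟩ := Finset.exists_subset_card_eq (hFc ▸ h)
    exact hbd ⟨G, hGc, fun a ha b hb hab => hFh a (hGF ha) b (hGF hb) hab⟩
  have hrP : ∀ x ∈ S, P x (r x) := fun x hx =>
    Nat.findGreatest_spec hℓ (hP1 x hx)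
  have hrlt : ∀ x ∈ S, r x < ℓ := fun x hx => hPlt x _ (hrP x hx)
  have step : ∀ x ∈ S, ∀ y ∈ S, x < y → f x y = 1 → r x < r y := by
    intro x hx y hy hxy hfxy
    obtain ⟨F, hFS, hFc, hFle, hxF, hFh⟩ := hrP x hx
    have hyF : y ∉ F := fun h => absurd (hFle y h) (not_le.2 hxy)
    have hPy : P y (r x + 1) := by
      refine ⟨insert y F, ?_, ?_, ?_, Finset.mem_insert_self _ _, ?_⟩
      · intro z hz
        rcases Finset.mem_insert.1 hz with rfl | hz
        · exact hy
        · exact hFS hz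
      · rw [Finset.card_insert_of_notMem hyF, hFc]
      · intro z hz
        rcases Finset.mem_insert.1 hz with rfl | hz
        · exact le_rfl
        · exact (hFle z hz).trans hxy.le
      · intro a ha b hb hab
        rcases Finset.mem_insert.1 hb with rfl | hb
        · rcases Finset.mem_insert.1 ha with rfl | ha
          · omega
          · -- a ∈ F, so a ≤ x
            rcases eq_or_lt_of_le (hFle a ha) with rfl | hax
            · exact hfxy
            · have hax1 : f a x = 1 := hFh a ha x hxF hax
              have := htrans a (hFS ha) x hx b hy hax hxy (by rw [hax1, hfxy])
              rw [hax1] at this; exact this.symm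
        · rcases Finset.mem_insert.1 ha with hay | ha
          · have hbx : b ≤ x := hFle b hb
            subst hay; omega
          · exact hFh a ha b hb hab
    have : r x + 1 ≤ r y := Nat.le_findGreatest (hrlt x hx) hPy
    omega
  -- pigeonhole on the rank
  have hℓpos : 0 < ℓ := hℓ
  let g : ↥S → Fin ℓ := fun x => ⟨r x % ℓ, Nat.mod_lt _ hℓpos⟩
  haveI : Infinite ↥S := hSinf.to_subtype
  obtain ⟨k, hk⟩ := Finite.exists_infinite_fiber g
  refine ⟨Subtype.val '' (g ⁻¹' {k}), ?_, ?_, ?_⟩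
  · rintro x ⟨⟨x, hx⟩, -, rfl⟩; exact hx
  · exact (Set.infinite_coe_iff.mp hk).image (Set.injOn_of_injective Subtype.val_injective)
  · rintro x ⟨⟨x, hxS⟩, hx, rfl⟩ y ⟨⟨y, hyS⟩, hy, rfl⟩ hxy
    simp only [Set.mem_preimage, Set.mem_singleton_iff, g] at hx hy
    have hrx : r x % ℓ = r x := Nat.mod_eq_of_lt (hrlt x hxS)
    have hry : r y % ℓ = r y := Nat.mod_eq_of_lt (hrlt y hyS)
    have hreq : r x = r y := by
      have := congrArg Fin.val (hx.trans hy.symm)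
      simpa [hrx, hry] using this
    by_contra hne
    have h1 : f x y = 1 := by
      have := (f x y).isLt
      have h0 : (f x y).val ≠ 0 := fun h => hne (Fin.ext h)
      exact Fin.ext (by omega)
    exact absurd hreq (step x hxS y hyS hxy h1).ne
end

section
/- Let k ≥ 1, let E ⊆ {0,…,k−1} × {0,…,k−1} be a digraph, let g : ℕ → {0,…,k−1}, and define f : [ℕ]² → {0,1} for x < y by f(x,y) = 1 if and only if (g(x), g(y)) ∈ E. Suppose H ⊆ ℕ is an infinite set such that for every x ∈ H, f(x,y) = 0 for all but finitely many y ∈ H. Let I = { i < k : { x ∈ H : g(x) = i } is infinite }. Then I is an independent set of E, i.e., (I × I) ∩ E = ∅. -/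
/-- Let `E` be a digraph on `{0,…,k-1}`, `g : ℕ → Fin k`, and
`f(x,y) = 1 ↔ (g x, g y) ∈ E` (for `x < y`). If `H` is infinite and every `x ∈ H`
satisfies `f x y = 0` for all but finitely many `y ∈ H`, then
`I = { i : { x ∈ H : g x = i } is infinite }` is independent in `E`. -/
theorem limit_colors_independent
    (k : ℕ) (hk : 1 ≤ k) (E : Fin k → Fin k → Prop)
    (g : ℕ → Fin k) (f : ℕ → ℕ → Fin 2)
    (hf : ∀ x y : ℕ, x < y → (f x y = 1 ↔ E (g x) (g y)))
    (H : Set ℕ) (hHinf : H.Infinite)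
    (hlim : ∀ x ∈ H, {y : ℕ | y ∈ H ∧ x < y ∧ f x y ≠ 0}.Finite) :
    ∀ i j : Fin k, {x : ℕ | x ∈ H ∧ g x = i}.Infinite →
      {x : ℕ | x ∈ H ∧ g x = j}.Infinite → ¬ E i j := by
  intro i j hi hj hE
  obtain ⟨x, hx⟩ := hi.nonempty
  obtain ⟨hxH, hgx⟩ := hx
  have hfin := hlim x hxH
  have hinf2 : ({x : ℕ | x ∈ H ∧ g x = j} \ {y : ℕ | y ∈ H ∧ x < y ∧ f x y ≠ 0}).Infinite :=
    hj.diff hfin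
  obtain ⟨y, hy, hxy⟩ := hinf2.exists_gt x
  obtain ⟨⟨hyH, hgy⟩, hnb⟩ := hy
  have hfy : f x y = 0 := by
    by_contra h
    exact hnb ⟨hyH, hxy, h⟩
  have : f x y = 1 := (hf x y hxy).mpr (by rw [hgx, hgy]; exact hE)
  rw [hfy] at this
  exact absurd this (by decide)
end

section
/- For every k ∈ ℕ there exists L ∈ ℕ such that for every ℓ ≥ L there is a simple graph on k·(ℓ−1)+1 vertices which is triangle-free and has no independent set of size ℓ. -/
open Finset

/-- Counting functions with constraints on a set of coordinates. -/
lemma count_pi {C : Type*} [Fintype C] [DecidableEq C] (m a : ℕ) (s : Finset C)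
    (P : Fin m → Prop) [DecidablePred P] (ha : Fintype.card {x : Fin m // P x} = a) :
    (univ.filter fun ω : C → Fin m => ∀ c ∈ s, P (ω c)).card
      = a ^ s.card * m ^ (Fintype.card C - s.card) := by
  classical
  rw [← Fintype.card_subtype]
  have e : {ω : C → Fin m // ∀ c ∈ s, P (ω c)} ≃ ∀ c : C, {x : Fin m // c ∈ s → P x} :=
    Equiv.subtypePiEquivPi (p := fun c x => c ∈ s → P x)
  rw [Fintype.card_congr e, Fintype.card_pi]
  have : ∀ c : C, Fintype.card {x : Fin m // c ∈ s → P x}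
      = if c ∈ s then a else m := by
    intro c
    by_cases hc : c ∈ s
    · simp only [hc, if_true]
      rw [← ha]
      exact Fintype.card_congr (Equiv.subtypeEquivRight (by simp [hc]))
    · simp only [hc, if_false]
      rw [Fintype.card_congr (Equiv.subtypeUnivEquiv (fun x (h : False) => h.elim)), Fintype.card_fin]
  rw [Finset.prod_congr rfl (fun c _ => this c), Finset.prod_ite, Finset.prod_const,
    Finset.prod_const]
  congr 1
  · congr 1; rw [Finset.filter_mem_eq_inter, Finset.univ_inter]
  · congr 1
    rw [Finset.filter_not, Finset.filter_mem_eq_inter, Finset.univ_inter, card_sdiff_of_subset (subset_univ s)]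
    rfl

lemma markov_nat {α : Type*} [Fintype α] (f : α → ℕ) (t : ℕ) [DecidablePred fun a => t ≤ f a] :
    (univ.filter fun a => t ≤ f a).card * t ≤ ∑ a, f a := by
  calc (univ.filter fun a => t ≤ f a).card * t
      = ∑ _a ∈ univ.filter fun a => t ≤ f a, t := by rw [Finset.sum_const, smul_eq_mul]
    _ ≤ ∑ a ∈ univ.filter fun a => t ≤ f a, f a :=
        Finset.sum_le_sum fun a ha => (Finset.mem_filter.mp ha).2
    _ ≤ ∑ a, f a := Finset.sum_le_sum_of_subset (Finset.filter_subset _ _)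

lemma pow_succ_aux (a : ℕ) : ∀ n : ℕ, a ^ (n+1) + (n+1) * a ^ n ≤ (a+1) ^ (n+1) := by
  intro n
  induction n with
  | zero => simp [pow_succ]
  | succ n ih =>
    have : (a+1)^(n+2) = (a+1)^(n+1) * (a+1) := by ring
    rw [this]
    calc a ^ (n+2) + (n+2) * a ^ (n+1)
        ≤ (a ^ (n+1) + (n+1) * a ^ n) * (a+1) := by ring_nf; nlinarith [pow_nonneg (Nat.zero_le a) n]
      _ ≤ (a+1)^(n+1) * (a+1) := Nat.mul_le_mul_right _ ih

lemma two_mul_pow_le (d : ℕ) (hd : 1 ≤ d) : 2 * d ^ d ≤ (d+1) ^ d := by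
  obtain ⟨e, rfl⟩ := Nat.exists_eq_add_of_le hd
  have h := pow_succ_aux (1 + e) e
  calc 2 * (1+e) ^ (1+e) = (1+e) ^ (e+1) + (1+e) * (1+e) ^ e := by ring
    _ = (1+e) ^ (e+1) + (e+1) * (1+e) ^ e := by ring
    _ ≤ (1+e+1) ^ (e+1) := h
    _ = (1+e+1) ^ (1+e) := by ring

lemma pow_div_le (d c : ℕ) (hd : 1 ≤ d) : 2 ^ (c / d) * d ^ c ≤ (d+1) ^ c := by
  obtain ⟨q, r, hr, hc⟩ : ∃ q r, r < d ∧ c = d * q + r :=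
    ⟨c / d, c % d, Nat.mod_lt _ hd, (Nat.div_add_mod c d).symm ▸ rfl⟩
  have hq : c / d = q := by
    subst hc
    rw [Nat.mul_add_div hd, Nat.div_eq_of_lt hr, add_zero]
  subst hc
  rw [hq]
  have h1 : (d+1) ^ (d * q + r) = ((d+1) ^ d) ^ q * (d+1) ^ r := by
    rw [← pow_mul, ← pow_add]
  have h2 : ((d+1) ^ d) ^ q ≥ (2 * d ^ d) ^ q := Nat.pow_le_pow_left (two_mul_pow_le d hd) q
  have h3 : (d+1) ^ r ≥ d ^ r := Nat.pow_le_pow_left (by omega) r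
  calc 2 ^ q * d ^ (d * q + r) = (2 * d ^ d) ^ q * d ^ r := by
        rw [mul_pow, ← pow_mul, pow_add]; ring
    _ ≤ ((d+1) ^ d) ^ q * (d+1) ^ r := Nat.mul_le_mul h2 h3
    _ = (d+1) ^ (d * q + r) := h1.symm

lemma two_mul_choose_two (l : ℕ) : 2 * l.choose 2 = l * (l - 1) := by
  rcases l with _ | l
  · simp
  · have he : Even ((l + 1) * l) := by
      simpa [mul_comm] using Nat.even_mul_succ_self l
    rw [Nat.choose_two_right]
    have : (l + 1) * ((l : ℕ) + 1 - 1) = (l+1) * l := by simp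
    rw [this, Nat.two_mul_div_two_of_even he]

lemma choose_le_two_pow (N l : ℕ) : N.choose l ≤ 2 ^ N := by
  rcases le_or_gt l N with h | h
  · calc N.choose l ≤ ∑ i ∈ Finset.range (N+1), N.choose i :=
        Finset.single_le_sum (fun i _ => Nat.zero_le _) (Finset.mem_range.mpr (by omega))
    _ = 2 ^ N := Nat.sum_range_choose N
  · rw [Nat.choose_eq_zero_of_lt h]; exact Nat.zero_le _

lemma exists_good_graph (n l m : ℕ) (hn : 1 ≤ n) (hm : 2 ≤ m)
    (hA : 16 * n ^ 3 < (n + 1) * m ^ 3)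
    (hB : 2 * ((2 * n).choose l) * (m - 1) ^ (l.choose 2) ≤ m ^ (l.choose 2))
    (hc2E : l.choose 2 ≤ 2 * n * (2 * n)) (hE3 : 3 ≤ 2 * n * (2 * n)) :
    ∃ G : SimpleGraph (Fin n), G.CliqueFree 3 ∧
      ¬ ∃ S : Finset (Fin n), S.card = l ∧ ∀ u ∈ S, ∀ v ∈ S, ¬ G.Adj u v := by
  classical
  haveI : NeZero m := ⟨by omega⟩
  set N := 2 * n with hN
  set E := N * N with hE
  set c2 := l.choose 2 with hc2
  set adj : (Fin N × Fin N → Fin m) → Fin N → Fin N → Prop :=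
    fun ω u v => u ≠ v ∧ ω (min u v, max u v) = 0 with hadj
  have adj_symm : ∀ ω u v, adj ω u v → adj ω v u := by
    rintro ω u v ⟨h1, h2⟩
    exact ⟨h1.symm, by rwa [min_comm, max_comm]⟩
  set triples : Finset (Fin N × Fin N × Fin N) :=
    Finset.univ.filter (fun p => p.1 < p.2.1 ∧ p.2.1 < p.2.2) with htriples
  set tri : (Fin N × Fin N → Fin m) → Finset (Fin N × Fin N × Fin N) := fun ω => triples.filter
    (fun p => ω (p.1, p.2.1) = 0 ∧ ω (p.1, p.2.2) = 0 ∧ ω (p.2.1, p.2.2) = 0) with htri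
  have cardΩ : (Finset.univ : Finset (Fin N × Fin N → Fin m)).card = m ^ E := by
    rw [Finset.card_univ, Fintype.card_fun]
    simp [hE]
  have cardVV : Fintype.card (Fin N × Fin N) = E := by simp [hE]
  -- count of each triangle event
  have tri_count : ∀ p ∈ triples,
      (Finset.univ.filter fun ω : Fin N × Fin N → Fin m =>
        ω (p.1, p.2.1) = 0 ∧ ω (p.1, p.2.2) = 0 ∧ ω (p.2.1, p.2.2) = 0).card
        = m ^ (E - 3) := by
    intro p hp
    rw [htriples, Finset.mem_filter] at hp
    obtain ⟨-, h12, h23⟩ := hp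
    set s : Finset (Fin N × Fin N) := {(p.1, p.2.1), (p.1, p.2.2), (p.2.1, p.2.2)} with hs
    have hmem : ∀ ω : Fin N × Fin N → Fin m,
        (ω (p.1, p.2.1) = 0 ∧ ω (p.1, p.2.2) = 0 ∧ ω (p.2.1, p.2.2) = 0)
        ↔ ∀ c ∈ s, ω c = 0 := by
      intro ω
      constructor
      · rintro ⟨a, b, c⟩ x hx
        rw [hs] at hx
        simp only [Finset.mem_insert, Finset.mem_singleton] at hx
        rcases hx with rfl | rfl | rfl <;> assumption
      · intro h
        exact ⟨h _ (by simp [hs]), h _ (by simp [hs]), h _ (by simp [hs])⟩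
    have hscard : s.card = 3 := by
      rw [hs]
      rw [Finset.card_insert_of_notMem, Finset.card_insert_of_notMem, Finset.card_singleton]
      · simp only [Finset.mem_singleton]
        intro h
        exact absurd (congrArg Prod.fst h) (ne_of_lt h12)
      · simp only [Finset.mem_insert, Finset.mem_singleton]
        push_neg
        exact ⟨fun h => absurd (congrArg Prod.snd h) (ne_of_lt h23),
          fun h => absurd (congrArg Prod.fst h) (ne_of_lt h12)⟩
    have := count_pi (C := Fin N × Fin N) m 1 s (fun x => x = 0) (by rw [Fintype.card_subtype_eq])
    rw [Finset.filter_congr (fun ω _ => (hmem ω))] at *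
    rw [this, hscard, cardVV, one_pow, one_mul]
  -- expected number of triangles
  have sumT : ∑ ω : Fin N × Fin N → Fin m, (tri ω).card ≤ N ^ 3 * m ^ (E - 3) := by
    have : ∀ ω, (tri ω).card = ∑ p ∈ triples,
        if ω (p.1, p.2.1) = 0 ∧ ω (p.1, p.2.2) = 0 ∧ ω (p.2.1, p.2.2) = 0 then 1 else 0 :=
      fun ω => Finset.card_filter _ _
    rw [Finset.sum_congr rfl (fun ω _ => this ω), Finset.sum_comm]
    have : ∀ p ∈ triples, (∑ ω : Fin N × Fin N → Fin m,
        if ω (p.1, p.2.1) = 0 ∧ ω (p.1, p.2.2) = 0 ∧ ω (p.2.1, p.2.2) = 0 then 1 else 0)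
        = m ^ (E - 3) := by
      intro p hp
      rw [← Finset.card_filter]
      exact tri_count p hp
    rw [Finset.sum_congr rfl this, Finset.sum_const, smul_eq_mul]
    have : triples.card ≤ N ^ 3 := by
      calc triples.card ≤ (Finset.univ : Finset (Fin N × Fin N × Fin N)).card :=
            Finset.card_le_card (Finset.filter_subset _ _)
        _ = N ^ 3 := by simp; ring
    exact Nat.mul_le_mul_right _ this
  -- count for a fixed independent set
  have indep_count : ∀ S : Finset (Fin N), S.card = l →
      (Finset.univ.filter fun ω : Fin N × Fin N → Fin m =>
        ∀ u ∈ S, ∀ v ∈ S, ¬ adj ω u v).card ≤ (m - 1) ^ c2 * m ^ (E - c2) := by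
    intro S hS
    set sS : Finset (Fin N × Fin N) := (S ×ˢ S).filter (fun p => p.1 < p.2) with hsS
    have hcard_sS : sS.card = c2 := by
      have h1 : sS.card = ((S ×ˢ S).filter fun p => p.2 < p.1).card := by
        apply Finset.card_bij (fun p _ => (p.2, p.1))
        · intro a ha
          rw [Finset.mem_filter, Finset.mem_product] at ha ⊢
          exact ⟨⟨ha.1.2, ha.1.1⟩, ha.2⟩
        · intro a _ b _ h
          rw [Prod.ext_iff] at h
          exact Prod.ext h.2 h.1
        · intro b hb
          rw [Finset.mem_filter, Finset.mem_product] at hb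
          exact ⟨(b.2, b.1), by
            rw [Finset.mem_filter, Finset.mem_product]
            exact ⟨⟨hb.1.2, hb.1.1⟩, hb.2⟩, rfl⟩
      have h2 : sS ∪ ((S ×ˢ S).filter fun p => p.2 < p.1) = S.offDiag := by
        ext p
        simp only [hsS, Finset.mem_union, Finset.mem_filter, Finset.mem_product,
          Finset.mem_offDiag]
        constructor
        · rintro (⟨⟨u1, u2⟩, u3⟩ | ⟨⟨u1, u2⟩, u3⟩)
          · exact ⟨u1, u2, ne_of_lt u3⟩
          · exact ⟨u1, u2, (ne_of_lt u3).symm⟩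
        · rintro ⟨u1, u2, u3⟩
          rcases u3.lt_or_gt with h | h
          · exact Or.inl ⟨⟨u1, u2⟩, h⟩
          · exact Or.inr ⟨⟨u1, u2⟩, h⟩
      have hdisj : Disjoint sS ((S ×ˢ S).filter fun p => p.2 < p.1) := by
        rw [Finset.disjoint_left]
        intro p hp hq
        rw [hsS, Finset.mem_filter] at hp
        rw [Finset.mem_filter] at hq
        exact absurd hq.2 (lt_asymm hp.2)
      have h3 : sS.card + sS.card = S.offDiag.card := by
        rw [← h2, Finset.card_union_of_disjoint hdisj, h1]
      rw [Finset.offDiag_card, hS] at h3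
      have h4 : 2 * c2 = l * (l - 1) := two_mul_choose_two l
      rcases Nat.eq_zero_or_pos l with rfl | hl
      · have hc20 : c2 = 0 := by simp [hc2]
        omega
      · obtain ⟨j, rfl⟩ : ∃ j, l = j + 1 := ⟨l - 1, by omega⟩
        have h5 : (j+1) * (j+1) = (j+1) * j + (j+1) := by ring
        have h6 : (j+1) * ((j+1) - 1) = (j+1) * j := by simp
        omega
    have hsub : (Finset.univ.filter fun ω : Fin N × Fin N → Fin m =>
        ∀ u ∈ S, ∀ v ∈ S, ¬ adj ω u v)
        ⊆ (Finset.univ.filter fun ω : Fin N × Fin N → Fin m => ∀ c ∈ sS, ¬ ω c = 0) := by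
      intro ω hmemω
      rw [Finset.mem_filter] at hmemω ⊢
      refine ⟨Finset.mem_univ _, ?_⟩
      obtain ⟨-, hω⟩ := hmemω
      intro c hc
      rw [hsS, Finset.mem_filter, Finset.mem_product] at hc
      obtain ⟨⟨hu, hv⟩, hlt⟩ := hc
      have hc' : ((min c.1 c.2, max c.1 c.2) : Fin N × Fin N) = c := by
        rw [min_eq_left hlt.le, max_eq_right hlt.le]
      intro h0
      exact hω c.1 hu c.2 hv ⟨ne_of_lt hlt, by rw [hc']; exact h0⟩
    have hcount := count_pi (C := Fin N × Fin N) m (m - 1) sS (fun x => ¬ x = 0)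
      (by simp [Fintype.card_subtype_compl])
    calc _ ≤ _ := Finset.card_le_card hsub
      _ = (m - 1) ^ c2 * m ^ (E - c2) := by rw [hcount, hcard_sS, cardVV]
  -- the two bad events
  set Bad1 : Finset (Fin N × Fin N → Fin m) :=
    Finset.univ.filter (fun ω => n + 1 ≤ (tri ω).card) with hBad1
  set Bad2 : Finset (Fin N × Fin N → Fin m) :=
    Finset.univ.filter (fun ω => ∃ S ∈ Finset.powersetCard l (Finset.univ : Finset (Fin N)),
      ∀ u ∈ S, ∀ v ∈ S, ¬ adj ω u v) with hBad2
  have bad1_bound : Bad1.card * (n + 1) ≤ N ^ 3 * m ^ (E - 3) :=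
    le_trans (markov_nat (fun ω => (tri ω).card) (n + 1)) sumT
  have bad2_bound : Bad2.card ≤ N.choose l * ((m - 1) ^ c2 * m ^ (E - c2)) := by
    have hsub : Bad2 ⊆ (Finset.powersetCard l (Finset.univ : Finset (Fin N))).biUnion
        (fun S => Finset.univ.filter fun ω => ∀ u ∈ S, ∀ v ∈ S, ¬ adj ω u v) := by
      intro ω hω
      rw [hBad2, Finset.mem_filter] at hω
      obtain ⟨-, S, hSmem, hSind⟩ := hω
      exact Finset.mem_biUnion.mpr ⟨S, hSmem, Finset.mem_filter.mpr ⟨Finset.mem_univ _, hSind⟩⟩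
    calc Bad2.card ≤ _ := Finset.card_le_card hsub
      _ ≤ ∑ S ∈ Finset.powersetCard l (Finset.univ : Finset (Fin N)),
          (Finset.univ.filter fun ω : Fin N × Fin N → Fin m =>
            ∀ u ∈ S, ∀ v ∈ S, ¬ adj ω u v).card := Finset.card_biUnion_le
      _ ≤ ∑ _S ∈ Finset.powersetCard l (Finset.univ : Finset (Fin N)),
          (m - 1) ^ c2 * m ^ (E - c2) := by
          apply Finset.sum_le_sum
          intro S hSmem
          exact indep_count S (Finset.mem_powersetCard_univ.mp hSmem)
      _ = N.choose l * ((m - 1) ^ c2 * m ^ (E - c2)) := by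
          rw [Finset.sum_const, smul_eq_mul, Finset.card_powersetCard, Finset.card_univ]
          simp
  -- there is a good ω
  have hEsplit3 : m ^ E = m ^ 3 * m ^ (E - 3) := by
    rw [← pow_add]
    congr 1
    omega
  have hEsplitc2 : m ^ E = m ^ c2 * m ^ (E - c2) := by
    rw [← pow_add]
    congr 1
    omega
  have key1 : 2 * (Bad1.card * (n + 1)) < (n + 1) * m ^ E := by
    calc 2 * (Bad1.card * (n + 1)) ≤ 2 * (N ^ 3 * m ^ (E - 3)) := by omega
      _ = (16 * n ^ 3) * m ^ (E - 3) := by rw [hN]; ring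
      _ < ((n + 1) * m ^ 3) * m ^ (E - 3) :=
          mul_lt_mul_of_pos_right hA (Nat.pow_pos (by omega))
      _ = (n + 1) * m ^ E := by rw [hEsplit3]; ring
  have key2 : 2 * (Bad2.card * (n + 1)) ≤ (n + 1) * m ^ E := by
    calc 2 * (Bad2.card * (n + 1))
        ≤ 2 * ((N.choose l * ((m - 1) ^ c2 * m ^ (E - c2))) * (n + 1)) := by
          have := Nat.mul_le_mul_right (n + 1) bad2_bound
          omega
      _ = (n + 1) * ((2 * N.choose l * (m - 1) ^ c2) * m ^ (E - c2)) := by ring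
      _ ≤ (n + 1) * (m ^ c2 * m ^ (E - c2)) := by
          apply Nat.mul_le_mul_left
          apply Nat.mul_le_mul_right
          rw [hN]
          exact hB
      _ = (n + 1) * m ^ E := by rw [hEsplitc2]
  have hlt : Bad1.card + Bad2.card < m ^ E := by
    have h1 : 2 * ((Bad1.card + Bad2.card) * (n + 1)) < 2 * ((n + 1) * m ^ E) := by
      calc 2 * ((Bad1.card + Bad2.card) * (n + 1))
          = 2 * (Bad1.card * (n + 1)) + 2 * (Bad2.card * (n + 1)) := by ring
        _ < (n + 1) * m ^ E + (n + 1) * m ^ E := by omega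
        _ = 2 * ((n + 1) * m ^ E) := by ring
    have h2 : (Bad1.card + Bad2.card) * (n + 1) < (n + 1) * m ^ E := by omega
    rw [mul_comm (n + 1) (m ^ E)] at h2
    exact Nat.lt_of_mul_lt_mul_right h2
  obtain ⟨ω, hω⟩ : ∃ ω : Fin N × Fin N → Fin m, ω ∉ Bad1 ∪ Bad2 := by
    by_contra hcon
    push_neg at hcon
    have : (Finset.univ : Finset (Fin N × Fin N → Fin m)) ⊆ Bad1 ∪ Bad2 :=
      fun ω _ => hcon ω
    have hcard := Finset.card_le_card this
    rw [cardΩ] at hcard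
    have := Finset.card_union_le Bad1 Bad2
    omega
  rw [Finset.mem_union] at hω
  push_neg at hω
  obtain ⟨hω1, hω2⟩ := hω
  rw [hBad1, Finset.mem_filter] at hω1
  push_neg at hω1
  have hT : (tri ω).card ≤ n := by
    have := hω1 (Finset.mem_univ _)
    omega
  rw [hBad2, Finset.mem_filter] at hω2
  push_neg at hω2
  have hInd : ∀ S : Finset (Fin N), S.card = l → ∃ u ∈ S, ∃ v ∈ S, adj ω u v := by
    intro S hS
    have := hω2 (Finset.mem_univ _) S (Finset.mem_powersetCard_univ.mpr hS)
    exact this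
  -- delete one vertex of each triangle
  set D : Finset (Fin N) := (tri ω).image (fun p => p.1) with hD
  have hDcard : D.card ≤ n := le_trans (Finset.card_image_le) hT
  set R : Finset (Fin N) := Finset.univ \ D with hR
  have hRcard : n ≤ R.card := by
    rw [hR, Finset.card_sdiff_of_subset (Finset.subset_univ _), Finset.card_univ]
    simp only [Fintype.card_fin]
    omega
  obtain ⟨R', hR'sub, hR'card⟩ := Finset.exists_subset_card_eq hRcard
  let e : Fin n → Fin N := fun a => ((R'.orderIsoOfFin hR'card) a : Fin N)
  have he_mem : ∀ a, e a ∈ R' := fun a => ((R'.orderIsoOfFin hR'card) a).2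
  have he_inj : Function.Injective e := fun a b h =>
    (R'.orderIsoOfFin hR'card).injective (Subtype.ext h)
  have keyD : ∀ x y z : Fin N, x < y → y < z →
      adj ω x y → adj ω x z → adj ω y z → x ∈ D := by
    intro x y z hxy hyz a1 a2 a3
    simp only [hadj] at a1 a2 a3
    rw [hD, Finset.mem_image]
    refine ⟨(x, y, z), ?_, rfl⟩
    rw [htri, Finset.mem_filter]
    constructor
    · rw [htriples, Finset.mem_filter]
      exact ⟨Finset.mem_univ _, hxy, hyz⟩
    · refine ⟨?_, ?_, ?_⟩
      · have := a1.2
        rwa [min_eq_left hxy.le, max_eq_right hxy.le] at this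
      · have := a2.2
        rwa [min_eq_left (hxy.trans hyz).le, max_eq_right (hxy.trans hyz).le] at this
      · have := a3.2
        rwa [min_eq_left hyz.le, max_eq_right hyz.le] at this
  have noTri : ∀ x y z : Fin N, x ∈ R' → y ∈ R' → z ∈ R' → x ≠ y → x ≠ z → y ≠ z →
      adj ω x y → adj ω x z → adj ω y z → False := by
    intro x y z hx hy hz nxy nxz nyz axy axz ayz
    have hnotD : ∀ w ∈ R', w ∉ D := by
      intro w hw
      have := hR'sub hw
      rw [hR, Finset.mem_sdiff] at this
      exact this.2
    rcases nxy.lt_or_gt with h1 | h1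
    · rcases nyz.lt_or_gt with h2 | h2
      · exact hnotD x hx (keyD x y z h1 h2 axy axz ayz)
      · rcases nxz.lt_or_gt with h3 | h3
        · exact hnotD x hx (keyD x z y h3 h2 axz axy (adj_symm _ _ _ ayz))
        · exact hnotD z hz (keyD z x y h3 h1 (adj_symm _ _ _ axz) (adj_symm _ _ _ ayz) axy)
    · rcases nxz.lt_or_gt with h2 | h2
      · exact hnotD y hy (keyD y x z h1 h2 (adj_symm _ _ _ axy) ayz axz)
      · rcases nyz.lt_or_gt with h3 | h3
        · exact hnotD y hy (keyD y z x h3 h2 ayz (adj_symm _ _ _ axy) (adj_symm _ _ _ axz))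
        · exact hnotD z hz (keyD z y x h3 h1 (adj_symm _ _ _ ayz) (adj_symm _ _ _ axz)
            (adj_symm _ _ _ axy))
  refine ⟨⟨fun a b => adj ω (e a) (e b), ?_, ?_⟩, ?_, ?_⟩
  · constructor; intro a b h
    exact adj_symm _ _ _ h
  · constructor; intro a h
    rw [hadj] at h
    exact h.1 rfl
  · -- triangle-free
    intro t ht
    obtain ⟨a, b, c, hab, hac, hbc, rfl⟩ := Finset.card_eq_three.mp ht.card_eq
    have Aab : adj ω (e a) (e b) := ht.isClique (by simp) (by simp) hab
    have Aac : adj ω (e a) (e c) := ht.isClique (by simp) (by simp) hac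
    have Abc : adj ω (e b) (e c) := ht.isClique (by simp) (by simp) hbc
    exact noTri (e a) (e b) (e c) (he_mem a) (he_mem b) (he_mem c)
      (fun h => hab (he_inj h)) (fun h => hac (he_inj h)) (fun h => hbc (he_inj h)) Aab Aac Abc
  · -- no independent set of size l
    rintro ⟨S, hScard, hSind⟩
    obtain ⟨u, hu, v, hv, huv⟩ := hInd (S.image e)
      (by rw [Finset.card_image_of_injective _ he_inj, hScard])
    rw [Finset.mem_image] at hu hv
    obtain ⟨a, ha, rfl⟩ := hu
    obtain ⟨b, hb, rfl⟩ := hv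
    exact hSind a ha b hb huv

/-- Erdős: For every `k` there exists `L` such that for every `ℓ ≥ L`
there is a triangle-free simple graph on `k·(ℓ-1)+1` vertices with no independent
set of size `ℓ`. -/
theorem erdos_triangle_free_graphs :
    ∀ k : ℕ, ∃ L : ℕ, ∀ ℓ : ℕ, L ≤ ℓ →
      ∃ G : SimpleGraph (Fin (k * (ℓ - 1) + 1)), G.CliqueFree 3 ∧
        ¬ ∃ S : Finset (Fin (k * (ℓ - 1) + 1)), S.card = ℓ ∧
          ∀ u ∈ S, ∀ v ∈ S, ¬ G.Adj u v := by
  intro k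
  rcases Nat.eq_zero_or_pos k with rfl | hk
  · refine ⟨2, fun ℓ hℓ => ⟨⊥, SimpleGraph.cliqueFree_bot (by omega), ?_⟩⟩
    rintro ⟨S, hS, -⟩
    have h1 := Finset.card_le_univ S
    simp only [Finset.card_univ, Fintype.card_fin] at h1
    omega
  · refine ⟨8192 * k ^ 5 + 8 * k + 3, fun ℓ hℓ => ?_⟩
    have hk5 : 1 ≤ k ^ 5 := Nat.one_le_pow _ _ hk
    have hℓ3 : 3 ≤ ℓ := by omega
    set n := k * (ℓ - 1) + 1 with hn
    set d := ℓ / (8 * k) with hd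
    have h8k : 0 < 8 * k := by omega
    have hd1 : 1 ≤ d := by
      rw [hd, Nat.le_div_iff_mul_le h8k]
      omega
    have hP : ℓ - 1 ≤ k * (ℓ - 1) := Nat.le_mul_of_pos_left _ hk
    have t1 : 8 * k * d ≤ ℓ := by
      calc 8 * k * d = d * (8 * k) := by ring
        _ ≤ ℓ := Nat.div_mul_le_self ℓ (8 * k)
    have t3 : 2 * ℓ.choose 2 = ℓ * (ℓ - 1) := two_mul_choose_two ℓ
    -- hypothesis A
    have hdm : ℓ + 1 ≤ 8 * k * (d + 1) := by
      have e1 : 8 * k * (d + 1) = 8 * k * d + 8 * k := by ring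
      have e2 : 8 * k * d + ℓ % (8 * k) = ℓ := by
        rw [hd]
        exact Nat.div_add_mod ℓ (8 * k)
      have e3 : ℓ % (8 * k) < 8 * k := Nat.mod_lt _ h8k
      omega
    have hcube : (ℓ + 1) ^ 3 ≤ 512 * k ^ 3 * (d + 1) ^ 3 := by
      calc (ℓ + 1) ^ 3 ≤ (8 * k * (d + 1)) ^ 3 := Nat.pow_le_pow_left hdm 3
        _ = 512 * k ^ 3 * (d + 1) ^ 3 := by ring
    have hl3 : 512 * k ^ 3 * (16 * k ^ 2 * ℓ ^ 2) ≤ (ℓ + 1) ^ 3 := by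
      have e5 : 512 * k ^ 3 * (16 * k ^ 2 * ℓ ^ 2) = (8192 * k ^ 5) * ℓ ^ 2 := by ring
      have e6 : (8192 * k ^ 5) * ℓ ^ 2 ≤ ℓ * ℓ ^ 2 :=
        Nat.mul_le_mul_right _ (by omega)
      have e7 : ℓ * ℓ ^ 2 = ℓ ^ 3 := by ring
      have e8 : ℓ ^ 3 ≤ (ℓ + 1) ^ 3 := Nat.pow_le_pow_left (by omega) 3
      omega
    have hd3 : 16 * k ^ 2 * ℓ ^ 2 ≤ (d + 1) ^ 3 := by
      have := le_trans hl3 hcube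
      exact Nat.le_of_mul_le_mul_left this (by positivity)
    have hnkl : n ≤ k * ℓ := by
      have e9 : k * ℓ = k * (ℓ - 1) + k := by
        conv_lhs => rw [show ℓ = (ℓ - 1) + 1 from by omega]
        rw [Nat.mul_add, Nat.mul_one]
      omega
    have hn2 : 16 * n ^ 2 ≤ (d + 1) ^ 3 := by
      calc 16 * n ^ 2 ≤ 16 * (k * ℓ) ^ 2 :=
            Nat.mul_le_mul_left _ (Nat.pow_le_pow_left hnkl 2)
        _ = 16 * k ^ 2 * ℓ ^ 2 := by ring
        _ ≤ (d + 1) ^ 3 := hd3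
    have hA : 16 * n ^ 3 < (n + 1) * (d + 1) ^ 3 := by
      have e12 : (n + 1) * (16 * n ^ 2) = 16 * n ^ 3 + 16 * n ^ 2 := by ring
      have e13 : (n + 1) * (16 * n ^ 2) ≤ (n + 1) * (d + 1) ^ 3 :=
        Nat.mul_le_mul_left _ hn2
      have e14 : 1 ≤ n ^ 2 := Nat.one_le_pow _ _ (by omega)
      omega
    -- hypothesis B
    have t2 : 2 ≤ k * (ℓ - 1) := le_trans (by omega) hP
    have t5 : (2 * n + 1) * d * 2 ≤ 2 * ℓ.choose 2 := by
      have t5a : 2 * n + 1 ≤ 4 * (k * (ℓ - 1)) := by omega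
      have t5b : (2 * n + 1) * d ≤ 4 * (k * (ℓ - 1)) * d := Nat.mul_le_mul_right d t5a
      have t5c : 4 * (k * (ℓ - 1)) * d * 2 = (8 * k * d) * (ℓ - 1) := by ring
      have t5d : (8 * k * d) * (ℓ - 1) ≤ ℓ * (ℓ - 1) := Nat.mul_le_mul_right _ t1
      omega
    have hq : 2 * n + 1 ≤ ℓ.choose 2 / d := by
      rw [Nat.le_div_iff_mul_le (by omega)]
      omega
    have hB : 2 * ((2 * n).choose ℓ) * d ^ ℓ.choose 2 ≤ (d + 1) ^ ℓ.choose 2 := by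
      calc 2 * ((2 * n).choose ℓ) * d ^ ℓ.choose 2
          ≤ 2 * 2 ^ (2 * n) * d ^ ℓ.choose 2 := by
            have := choose_le_two_pow (2 * n) ℓ
            exact Nat.mul_le_mul_right _ (by omega)
        _ = 2 ^ (2 * n + 1) * d ^ ℓ.choose 2 := by rw [pow_succ]; ring
        _ ≤ 2 ^ (ℓ.choose 2 / d) * d ^ ℓ.choose 2 :=
            Nat.mul_le_mul_right _ (Nat.pow_le_pow_right (by omega) hq)
        _ ≤ (d + 1) ^ ℓ.choose 2 := pow_div_le d _ hd1
    -- remaining side conditions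
    have hl2n : ℓ ≤ 2 * n := by omega
    have hc2E : ℓ.choose 2 ≤ 2 * n * (2 * n) := by
      have e15 : ℓ * (ℓ - 1) ≤ ℓ * ℓ := Nat.mul_le_mul_left _ (by omega)
      have e16 : ℓ * ℓ ≤ 2 * n * (2 * n) := Nat.mul_le_mul hl2n hl2n
      omega
    have hE3 : 3 ≤ 2 * n * (2 * n) := by
      have : 2 * 2 ≤ 2 * n * (2 * n) := Nat.mul_le_mul (by omega) (by omega)
      omega
    have := exists_good_graph n ℓ (d + 1) (by omega) (by omega) hA (by simpa using hB) hc2E hE3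
    exact this
end

section
/- Let f : [ℕ]² → {0,1} be a stable coloring. If the set { x ∈ ℕ : lim_y f(x,y) = 1 } is infinite, then there exists an infinite set H ⊆ ℕ which is f-homogeneous for color 1. -/
/-- If `f : [ℕ]² → 2` is stable and `{ x : lim_y f(x,y) = 1 }` is
infinite, then there is an infinite set homogeneous for color 1. -/
theorem stable_limit_one_gives_homogeneous
    (f : ℕ → ℕ → Fin 2)
    (hstab : ∀ x : ℕ, ∃ c : Fin 2, ∃ N : ℕ, ∀ y : ℕ, N ≤ y → x < y → f x y = c)
    (hinf : {x : ℕ | ∃ N : ℕ, ∀ y : ℕ, N ≤ y → x < y → f x y = 1}.Infinite) :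
    ∃ H : Set ℕ, H.Infinite ∧ ∀ x ∈ H, ∀ y ∈ H, x < y → f x y = 1 := by
  classical
  set S := {x : ℕ | ∃ N : ℕ, ∀ y : ℕ, N ≤ y → x < y → f x y = 1} with hS
  have hN : ∀ x ∈ S, ∃ N, ∀ y, N ≤ y → x < y → f x y = 1 := fun x hx => hx
  choose! N hNs using hN
  have hnext : ∀ m : ℕ, ∃ x, x ∈ S ∧ m < x := fun m => by
    obtain ⟨x, hx, hxm⟩ := hinf.exists_gt m
    exact ⟨x, hx, hxm⟩
  choose g hgS hgGt using hnext
  let a : ℕ → ℕ := fun n => Nat.rec (g 0) (fun _ p => g (max p (N p))) n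
  have haS : ∀ n, a n ∈ S := by
    intro n; cases n with
    | zero => exact hgS 0
    | succ k => exact hgS _
  have hstep : ∀ n, a n < a (n+1) := fun n =>
    lt_of_le_of_lt (le_max_left _ _) (hgGt _)
  have hNstep : ∀ n, N (a n) ≤ a (n+1) := fun n =>
    le_of_lt (lt_of_le_of_lt (le_max_right _ _) (hgGt _))
  have hmono : StrictMono a := strictMono_nat_of_lt_succ hstep
  refine ⟨Set.range a, Set.infinite_range_of_injective hmono.injective, ?_⟩
  rintro x ⟨i, rfl⟩ y ⟨j, rfl⟩ hxy
  have hij : i < j := hmono.lt_iff_lt.mp hxy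
  have hle : N (a i) ≤ a j := le_trans (hNstep i) (hmono.monotone (Nat.succ_le_of_lt hij))
  exact hNs (a i) (haS i) (a j) hle hxy
end

section
/- Let k ≥ 2 and let f : [ℕ]² → {0,1} be a coloring with no f-homogeneous set for color 1 of size k. Let T be a finite f-tree and let y ∈ ℕ be strictly greater than every entry of every sequence in T. Let σ ∈ T be a node of maximal length among nodes τ ∈ T of length < k−1 such that range(τ) ∪ {y} is f-homogeneous for color 1 (such a node exists, since the empty sequence qualifies). Then for every x ∈ ℕ with σ⌢x ∈ T, we have f(x,y) = 0. -/
/-- Let `f : [ℕ]² → 2` have no homogeneous set for color 1 of size `k`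
(`k ≥ 2`), let `T` be a finite `f`-tree (a nonempty, prefix-closed, finite set of
strictly increasing sequences whose ranges are `f`-homogeneous for color 1), and let
`y` be greater than every entry of every sequence of `T`. If `σ ∈ T` has maximal
length among nodes `τ ∈ T` of length `< k-1` with `range τ ∪ {y}` `f`-homogeneous
for color 1, then `f x y = 0` whenever `σ⌢x ∈ T`. -/
theorem maximal_node_extension_color_zero
    (k : ℕ) (hk : 2 ≤ k) (f : ℕ → ℕ → Fin 2)
    (hbd : ¬ ∃ F : Finset ℕ, F.card = k ∧ ∀ x ∈ F, ∀ y ∈ F, x < y → f x y = 1)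
    (T : Set (List ℕ)) (hTfin : T.Finite) (hTne : T.Nonempty)
    (hTpc : ∀ σ ∈ T, ∀ τ : List ℕ, τ <+: σ → τ ∈ T)
    (hTtree : ∀ σ ∈ T, List.Pairwise (fun a b => a < b ∧ f a b = 1) σ)
    (y : ℕ) (hy : ∀ σ ∈ T, ∀ x ∈ σ, x < y)
    (σ : List ℕ) (hσT : σ ∈ T) (hσlen : σ.length < k - 1)
    (hσhom : ∀ x ∈ σ, f x y = 1)
    (hσmax : ∀ τ ∈ T, τ.length < k - 1 → (∀ x ∈ τ, f x y = 1) →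
      τ.length ≤ σ.length) :
    ∀ x : ℕ, σ ++ [x] ∈ T → f x y = 0 := by
  intro x hxT
  by_contra hne
  have hfxy : f x y = 1 := by
    have := (f x y).isLt
    interval_cases h : (f x y : ℕ)
    · exact absurd (Fin.ext h) hne
    · exact Fin.ext h
  set τ : List ℕ := σ ++ [x] with hτ
  have hτhom : ∀ a ∈ τ, f a y = 1 := by
    intro a ha
    rcases List.mem_append.1 ha with h | h
    · exact hσhom a h
    · simp at h; subst h; exact hfxy
  have hτlen : τ.length = σ.length + 1 := by simp [hτ]
  -- τ.length can't be < k - 1 by maximality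
  have hlen : τ.length = k - 1 := by
    by_contra h
    have h2 : τ.length < k - 1 ∨ τ.length = k - 1 := by omega
    rcases h2 with h2 | h2
    · have := hσmax τ hxT h2 hτhom
      omega
    · exact h h2
  -- build a homogeneous set of size k
  have hpw := hTtree τ hxT
  have hnd : τ.Nodup := hpw.imp (fun h => Nat.ne_of_lt h.1)
  have hlty : ∀ a ∈ τ, a < y := hy τ hxT
  have hedge : ∀ a ∈ τ, ∀ b ∈ τ, a < b → f a b = 1 := by
    have hpw' : τ.Pairwise (fun a b =>
        (a < b → f a b = 1) ∧ (b < a → f b a = 1)) := by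
      refine hpw.imp ?_
      rintro a b ⟨hab, hf⟩
      exact ⟨fun _ => hf, fun h => absurd h (by omega)⟩
    have := @List.Pairwise.forall _ _ _ ⟨by intro a b h; exact ⟨h.2, h.1⟩⟩ hpw'
    intro a ha b hb hab
    rcases eq_or_ne a b with rfl | hne'
    · omega
    · exact (this ha hb hne').1 hab
  apply hbd
  refine ⟨insert y τ.toFinset, ?_, ?_⟩
  · rw [Finset.card_insert_of_notMem (by
      simp only [List.mem_toFinset]
      intro h; exact absurd rfl (Nat.ne_of_lt (hlty y h))),
      List.toFinset_card_of_nodup hnd]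
    omega
  · intro a ha b hb hab
    simp only [Finset.mem_insert, List.mem_toFinset] at ha hb
    rcases ha with rfl | ha
    · rcases hb with rfl | hb
      · omega
      · exact absurd hab (by have := hlty b hb; omega)
    · rcases hb with rfl | hb
      · exact hτhom a ha
      · exact hedge a ha b hb hab
end

section
/- Let n ≥ 1, let f : [ℕ]^{n+1} → {0,1} be a coloring, and let H ⊆ ℕ be an infinite set such that f is stable on H with all limits equal to 0: for every s ∈ [H]^n, f(s ∪ {y}) = 0 for all but finitely many y ∈ H. Then H contains an infinite subset H' such that f(t) = 0 for every (n+1)-element subset t of H'. -/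
/-- Let `f : [ℕ]^{n+1} → 2` and let `H` be an infinite set on which `f`
is stable with all limits 0: for every `n`-element subset `s` of `H`,
`f (s ∪ {y}) = 0` for all but finitely many `y ∈ H` (with `y > max s`). Then `H`
contains an infinite subset `H'` all of whose `(n+1)`-element subsets get color 0. -/
theorem stable_limit_zero_gives_homogeneous
    (n : ℕ) (hn : 1 ≤ n)
    (f : Finset ℕ → Fin 2)
    (H : Set ℕ) (hHinf : H.Infinite)
    (hlim : ∀ s : Finset ℕ, ↑s ⊆ H → s.card = n →
      {y : ℕ | y ∈ H ∧ (∀ x ∈ s, x < y) ∧ f (insert y s) ≠ 0}.Finite) :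
    ∃ H' : Set ℕ, H' ⊆ H ∧ H'.Infinite ∧
      ∀ t : Finset ℕ, ↑t ⊆ H' → t.card = n + 1 → f t = 0 := by
  classical
  set Bad : Finset ℕ → Set ℕ := fun F =>
    ⋃ s ∈ (F.powersetCard n : Finset (Finset ℕ)),
      {y : ℕ | y ∈ H ∧ (∀ x ∈ s, x < y) ∧ f (insert y s) ≠ 0} with hBadDef
  have hBadFin : ∀ F : Finset ℕ, ↑F ⊆ H → (Bad F).Finite := by
    intro F hF
    apply Set.Finite.biUnion (F.powersetCard n).finite_toSet
    intro s hs
    rw [Finset.mem_coe, Finset.mem_powersetCard] at hs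
    exact hlim s (fun x hx => hF (hs.1 hx)) hs.2
  set G : Finset ℕ → Set ℕ := fun F => H \ (Bad F ∪ Set.Iic (F.sup id)) with hGDef
  have hGinf : ∀ F : Finset ℕ, ↑F ⊆ H → (G F).Infinite := fun F hF =>
    hHinf.diff ((hBadFin F hF).union (Set.finite_Iic _))
  -- recursively defined finsets
  let Fs : ℕ → Finset ℕ := fun k => Nat.rec ∅ (fun _ F => insert (sInf (G F)) F) k
  have hFsucc : ∀ k, Fs (k + 1) = insert (sInf (G (Fs k))) (Fs k) := fun k => rfl
  set a : ℕ → ℕ := fun k => sInf (G (Fs k)) with haDef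
  have key : ∀ k, SetLike.coe (Fs k) ⊆ H ∧ a k ∈ G (Fs k) := by
    intro k
    induction k with
    | zero =>
      have h0 : SetLike.coe (Fs 0) ⊆ H := by simp [Fs]
      exact ⟨h0, Nat.sInf_mem (hGinf _ h0).nonempty⟩
    | succ k ih =>
      have hs : SetLike.coe (Fs (k + 1)) ⊆ H := by
        rw [hFsucc, Finset.coe_insert]
        exact Set.insert_subset ih.2.1 ih.1
      exact ⟨hs, Nat.sInf_mem (hGinf _ hs).nonempty⟩
  -- a k is greater than every element of Fs k
  have hgt : ∀ k, ∀ x ∈ Fs k, x < a k := by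
    intro k x hx
    have h2 := (key k).2.2
    have : ¬ a k ≤ (Fs k).sup id := fun h => h2 (Or.inr h)
    calc x ≤ (Fs k).sup id := Finset.le_sup (f := id) hx
    _ < a k := Nat.lt_of_not_le this
  have hmemFs : ∀ j k, j < k → a j ∈ Fs k := by
    intro j k hjk
    induction k with
    | zero => omega
    | succ k ih =>
      rw [hFsucc, Finset.mem_insert]
      rcases Nat.lt_succ_iff_lt_or_eq.mp hjk with h | h
      · exact Or.inr (ih h)
      · exact Or.inl (by rw [h])
  have hamono : StrictMono a := strictMono_nat_of_lt_succ fun k =>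
    hgt (k + 1) (a k) (hmemFs k (k + 1) (Nat.lt_succ_self k))
  refine ⟨Set.range a, ?_, Set.infinite_range_of_injective hamono.injective, ?_⟩
  · rintro x ⟨k, rfl⟩
    exact (key k).2.1
  · intro t ht hcard
    by_contra hne
    have htne : t.Nonempty := Finset.card_pos.mp (by omega)
    obtain ⟨k, hk⟩ := ht (Finset.mem_coe.mpr (t.max'_mem htne))
    set m := t.max' htne with hm
    set s := t.erase m with hsDef
    have hscard : s.card = n := by
      rw [hsDef, Finset.card_erase_of_mem (t.max'_mem htne), hcard]
      omega
    have hslt : ∀ x ∈ s, x < m := by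
      intro x hx
      exact lt_of_le_of_ne (t.le_max' x (Finset.mem_of_mem_erase hx))
        (Finset.ne_of_mem_erase hx)
    have hsFs : s ⊆ Fs k := by
      intro x hx
      obtain ⟨j, rfl⟩ := ht (Finset.mem_coe.mpr (Finset.mem_of_mem_erase hx))
      have : a j < a k := hk ▸ hslt _ hx
      exact hmemFs j k (hamono.lt_iff_lt.mp this)
    have hmem : m ∈ Bad (Fs k) := by
      rw [hBadDef]
      refine Set.mem_biUnion (Finset.mem_coe.mpr
        (Finset.mem_powersetCard.mpr ⟨hsFs, hscard⟩)) ?_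
      refine ⟨hk ▸ (key k).2.1, hslt, ?_⟩
      rw [Finset.insert_erase (t.max'_mem htne)]
      exact hne
    have h2 := (key k).2.2
    rw [hk] at h2
    exact h2 (Or.inl hmem)
end
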